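/- Let x₁* ≠ x₂* in ℝⁿ, σ₁, σ₂, L > 0, and suppose x ∈ B(x₁*, L/σ₁) ∩ B(x₂*, L/σ₂) (open balls), x ∉ {x₁*, x₂*}, and φ̃₁(x) + φ̃₂(x) > ψ(x) where φ̃ᵢ(x) = arccos((σᵢ/L)‖x - xᵢ*‖) and ψ(x) = ∠(x - x₁*, -(x - x₂*)). Then there exists a vector g ∈ ℝⁿ with ‖g‖ = L, ∠(g, x - x₁*) < φ̃₁(x), and ∠(-g, x - x₂*) < φ̃₂(x). -/

import Mathlib

open InnerProductGeometry in
lemma slerp_exists_aux {V : Type*} [NormedAddCommGroup V] [InnerProductSpace ℝ V]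
    (u v : V) (hu : ‖u‖ = 1) (hv : ‖v‖ = 1) (t : ℝ)
    (ht0 : 0 ≤ t) (ht1 : t ≤ angle u v) (hψ0 : 0 < angle u v) (hψπ : angle u v < Real.pi) :
    ∃ w : V, ‖w‖ = 1 ∧ angle w u = t ∧ angle w v = angle u v - t := by
  set ψ := angle u v with hψ
  have hsψ : 0 < Real.sin ψ := Real.sin_pos_of_pos_of_lt_pi hψ0 hψπ
  have hcos : (inner ℝ u v : ℝ) = Real.cos ψ := by
    have h := cos_angle u v
    rw [hu, hv] at h
    rw [← hψ] at h
    simpa using h.symm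
  have hcos' : (inner ℝ v u : ℝ) = Real.cos ψ := by rw [real_inner_comm]; exact hcos
  have hpyth := Real.sin_sq_add_cos_sq ψ
  have hsub := Real.sin_sub ψ t
  have hcsub := Real.cos_sub ψ t
  set w0 : V := Real.sin (ψ - t) • u + Real.sin t • v with hw0
  have hwu : (inner ℝ w0 u : ℝ) = Real.sin ψ * Real.cos t := by
    simp only [hw0, inner_add_left, real_inner_smul_left, real_inner_self_eq_norm_sq, hu,
      hcos']
    rw [hsub]; ring
  have hwv : (inner ℝ w0 v : ℝ) = Real.sin ψ * Real.cos (ψ - t) := by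
    simp only [hw0, inner_add_left, real_inner_smul_left, real_inner_self_eq_norm_sq, hv, hcos]
    rw [hsub, hcsub]; linear_combination (-Real.sin t) * hpyth
  have hww : (inner ℝ w0 w0 : ℝ) = Real.sin ψ ^ 2 := by
    have h1 : (inner ℝ w0 w0 : ℝ) = Real.sin (ψ - t) * (inner ℝ w0 u : ℝ)
        + Real.sin t * (inner ℝ w0 v : ℝ) := by
      conv_lhs => rw [hw0]
      rw [inner_add_right, real_inner_smul_right, real_inner_smul_right]
    rw [h1, hwu, hwv, hsub, hcsub]
    linear_combination (Real.sin ψ ^ 2) * Real.sin_sq_add_cos_sq t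
  have hnw0 : ‖w0‖ = Real.sin ψ := by
    have h2 : ‖w0‖ ^ 2 = Real.sin ψ ^ 2 := by rw [← real_inner_self_eq_norm_sq, hww]
    nlinarith [norm_nonneg w0]
  have hw0ne : Real.sin ψ ≠ 0 := ne_of_gt hsψ
  refine ⟨(Real.sin ψ)⁻¹ • w0, ?_, ?_, ?_⟩
  · rw [norm_smul, hnw0, Real.norm_eq_abs, abs_inv, abs_of_pos hsψ, inv_mul_cancel₀ hw0ne]
  · rw [angle_smul_left_of_pos _ _ (inv_pos.mpr hsψ)]
    rw [InnerProductGeometry.angle, hwu, hnw0, hu, mul_one,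
      mul_comm, mul_div_assoc, div_self hw0ne, mul_one]
    exact Real.arccos_cos ht0 (le_trans ht1 (le_of_lt hψπ))
  · rw [angle_smul_left_of_pos _ _ (inv_pos.mpr hsψ)]
    rw [InnerProductGeometry.angle, hwv, hnw0, hv, mul_one,
      mul_comm, mul_div_assoc, div_self hw0ne, mul_one]
    exact Real.arccos_cos (by linarith) (by linarith [hψπ, ht0])

/-- Let `x₁* ≠ x₂*` in `ℝⁿ`, `σ₁, σ₂, L > 0`, and suppose
`x ∈ B(x₁*, L/σ₁) ∩ B(x₂*, L/σ₂)` (open balls), `x ∉ {x₁*, x₂*}`, and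
`φ̃₁(x) + φ̃₂(x) > ψ(x)` where `φ̃ᵢ(x) = arccos((σᵢ/L)‖x - xᵢ*‖)` and
`ψ(x) = ∠(x - x₁*, -(x - x₂*))`.  Then there exists `g ∈ ℝⁿ` with `‖g‖ = L`,
`∠(g, x - x₁*) < φ̃₁(x)` and `∠(-g, x - x₂*) < φ̃₂(x)`. -/
theorem stmt_15 {n : ℕ} (σ₁ σ₂ L : ℝ) (h1 : 0 < σ₁) (h2 : 0 < σ₂) (hL : 0 < L)
    (x₁s x₂s x : EuclideanSpace ℝ (Fin n)) (hne : x₁s ≠ x₂s)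
    (hb1 : ‖x - x₁s‖ < L / σ₁) (hb2 : ‖x - x₂s‖ < L / σ₂)
    (hx1 : x ≠ x₁s) (hx2 : x ≠ x₂s)
    (hangle : InnerProductGeometry.angle (x - x₁s) (-(x - x₂s)) <
      Real.arccos (σ₁ / L * ‖x - x₁s‖) + Real.arccos (σ₂ / L * ‖x - x₂s‖)) :
    ∃ g : EuclideanSpace ℝ (Fin n), ‖g‖ = L ∧
      InnerProductGeometry.angle g (x - x₁s) < Real.arccos (σ₁ / L * ‖x - x₁s‖) ∧
      InnerProductGeometry.angle (-g) (x - x₂s) < Real.arccos (σ₂ / L * ‖x - x₂s‖) := by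
  open InnerProductGeometry in
  have hz1 : x - x₁s ≠ 0 := sub_ne_zero.mpr hx1
  have hz2 : x - x₂s ≠ 0 := sub_ne_zero.mpr hx2
  have ha : (0:ℝ) < ‖x - x₁s‖ := norm_pos_iff.mpr hz1
  have hb : (0:ℝ) < ‖x - x₂s‖ := norm_pos_iff.mpr hz2
  set a := ‖x - x₁s‖
  set b := ‖x - x₂s‖
  set φ₁ := Real.arccos (σ₁ / L * a) with hφ₁def
  set φ₂ := Real.arccos (σ₂ / L * b) with hφ₂def
  set ψ := InnerProductGeometry.angle (x - x₁s) (-(x - x₂s)) with hψdef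
  have hσL1 : 0 < σ₁ / L := div_pos h1 hL
  have hσL2 : 0 < σ₂ / L := div_pos h2 hL
  have hφ₁pos : 0 < φ₁ := Real.arccos_pos.mpr (by
    calc σ₁ / L * a < σ₁ / L * (L / σ₁) := by exact mul_lt_mul_of_pos_left hb1 hσL1
    _ = 1 := by field_simp)
  have hφ₂pos : 0 < φ₂ := Real.arccos_pos.mpr (by
    calc σ₂ / L * b < σ₂ / L * (L / σ₂) := by exact mul_lt_mul_of_pos_left hb2 hσL2
    _ = 1 := by field_simp)
  have hφ₁half : φ₁ < Real.pi / 2 :=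
    Real.arccos_lt_pi_div_two.mpr (mul_pos hσL1 ha)
  have hφ₂half : φ₂ < Real.pi / 2 :=
    Real.arccos_lt_pi_div_two.mpr (mul_pos hσL2 hb)
  by_cases hA : ψ < φ₁
  · refine ⟨(L / b) • (-(x - x₂s)), ?_, ?_, ?_⟩
    · rw [norm_smul, norm_neg, Real.norm_eq_abs, abs_of_pos (div_pos hL hb)]
      field_simp; rfl
    · rw [angle_smul_left_of_pos _ _ (div_pos hL hb), angle_comm]
      exact hA
    · have : -((L / b) • (-(x - x₂s))) = (L / b) • (x - x₂s) := by
        rw [smul_neg, neg_neg]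
      rw [this, angle_smul_left_of_pos _ _ (div_pos hL hb), angle_self hz2]
      exact hφ₂pos
  · by_cases hB : ψ < φ₂
    · refine ⟨(L / a) • (x - x₁s), ?_, ?_, ?_⟩
      · rw [norm_smul, Real.norm_eq_abs, abs_of_pos (div_pos hL ha)]
        field_simp; rfl
      · rw [angle_smul_left_of_pos _ _ (div_pos hL ha), angle_self hz1]
        exact hφ₁pos
      · have hrw : InnerProductGeometry.angle (-((L / a) • (x - x₁s))) (x - x₂s)
            = InnerProductGeometry.angle ((L / a) • (x - x₁s)) (-(x - x₂s)) := by
          rw [← angle_neg_neg ((L / a) • (x - x₁s)) (-(x - x₂s)), neg_neg]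
        rw [hrw, angle_smul_left_of_pos _ _ (div_pos hL ha)]
        exact hB
    · push_neg at hA hB
      have hψ0 : 0 < ψ := lt_of_lt_of_le hφ₁pos hA
      have hψπ : ψ < Real.pi := by linarith
      set u : EuclideanSpace ℝ (Fin n) := a⁻¹ • (x - x₁s) with hudef
      set v : EuclideanSpace ℝ (Fin n) := b⁻¹ • (-(x - x₂s)) with hvdef
      have hnu : ‖u‖ = 1 := by
        rw [hudef, norm_smul, Real.norm_eq_abs, abs_inv, abs_of_pos ha,
          inv_mul_cancel₀ (ne_of_gt ha)]
      have hnv : ‖v‖ = 1 := by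
        rw [hvdef, norm_smul, Real.norm_eq_abs, abs_inv, abs_of_pos hb, norm_neg,
          inv_mul_cancel₀ (ne_of_gt hb)]
      have huv : InnerProductGeometry.angle u v = ψ := by
        rw [hudef, hvdef, angle_smul_left_of_pos _ _ (inv_pos.mpr ha),
          angle_smul_right_of_pos _ _ (inv_pos.mpr hb)]
      set t := (ψ + φ₁ - φ₂) / 2 with htdef
      have ht0 : 0 ≤ t := by rw [htdef]; linarith
      have ht1 : t ≤ ψ := by rw [htdef]; linarith
      have htφ₁ : t < φ₁ := by rw [htdef]; linarith
      have htφ₂ : ψ - t < φ₂ := by rw [htdef]; linarith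
      obtain ⟨w, hw1, hw2, hw3⟩ := slerp_exists_aux u v hnu hnv t ht0
        (by rw [huv]; exact ht1) (by rw [huv]; exact hψ0) (by rw [huv]; exact hψπ)
      rw [huv] at hw3
      refine ⟨L • w, ?_, ?_, ?_⟩
      · rw [norm_smul, hw1, Real.norm_eq_abs, abs_of_pos hL, mul_one]
      · have hx1rw : x - x₁s = a • u := by
          rw [hudef, smul_smul, mul_inv_cancel₀ (ne_of_gt ha), one_smul]
        rw [hx1rw, angle_smul_left_of_pos _ _ hL, angle_smul_right_of_pos _ _ ha, hw2]
        exact htφ₁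
      · have hx2rw : x - x₂s = -(b • v) := by
          rw [hvdef, smul_smul, mul_inv_cancel₀ (ne_of_gt hb), one_smul, neg_neg]
        rw [hx2rw, angle_neg_neg, angle_smul_left_of_pos _ _ hL,
          angle_smul_right_of_pos _ _ hb, hw3]
        exact htφ₂
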